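/- Let X be a measurable space, L a type of losses, and func : L → X → (0,∞) a family of measurable positive functions. Let 0 < η ≤ 1/10 and 0 ≤ δ₀ ≤ 1. Assume that for every nonzero finite measure ρ on X and every ℓ ∈ L, the measure ρ_ℓ := ρ weighted by the density func(ℓ) is a nonzero finite measure, and the normalized probability measures ρ̄ and ρ̄_ℓ are (η, δ₀)-indistinguishable. Given a sequence (ℓ_1,…,ℓ_T) ∈ L^T and a nonzero finite measure μ_0 on X, define μ_t := μ_0 weighted by the density ∏_{i=1}^{t−1} func(ℓ_i), with normalized probability measure μ̄_t. Then for any two sequences (ℓ_1,…,ℓ_T) and (ℓ'_1,…,ℓ'_T) in L^T differing in exactly one index, and every t ∈ {1,…,T}, the corresponding normalized measures μ̄_t and μ̄'_t are (2η, 4δ₀)-indistinguishable. -/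

import Mathlib

open MeasureTheory ENNReal

lemma aux_finite_nonzero {X L : Type*} [MeasurableSpace X] (func : L → X → ℝ≥0∞)
    (hmeas : ∀ ℓ : L, Measurable (func ℓ))
    (hstep : ∀ ρ : Measure X, IsFiniteMeasure ρ → ρ ≠ 0 → ∀ ℓ : L,
      IsFiniteMeasure (ρ.withDensity (func ℓ)) ∧ ρ.withDensity (func ℓ) ≠ 0)
    (μ₀ : Measure X) (h0 : IsFiniteMeasure μ₀) (hne : μ₀ ≠ 0)
    (ℓ : ℕ → L) (s : Finset ℕ) :
    IsFiniteMeasure (μ₀.withDensity fun x => ∏ i ∈ s, func (ℓ i) x) ∧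
      μ₀.withDensity (fun x => ∏ i ∈ s, func (ℓ i) x) ≠ 0 := by
  classical
  induction s using Finset.induction_on with
  | empty =>
      simpa [MeasureTheory.withDensity_one] using And.intro h0 hne
  | insert a s ha ih =>
      have hprodmeas : Measurable fun x => ∏ i ∈ s, func (ℓ i) x :=
        Finset.measurable_prod _ fun i _ => hmeas (ℓ i)
      have key : (fun x => ∏ i ∈ insert a s, func (ℓ i) x) =
          (fun x => ∏ i ∈ s, func (ℓ i) x) * func (ℓ a) := by
        funext x
        simp [Finset.prod_insert ha, mul_comm]
      rw [key, withDensity_mul _ hprodmeas (hmeas (ℓ a))]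
      exact hstep _ ih.1 ih.2 (ℓ a)

theorem multiplicative_update_privacy {X L : Type*} [MeasurableSpace X]
    [DecidableEq L] (func : L → X → ℝ≥0∞)
    (hmeas : ∀ ℓ : L, Measurable (func ℓ))
    (hpos : ∀ (ℓ : L) (x : X), 0 < func ℓ x)
    (hfin : ∀ (ℓ : L) (x : X), func ℓ x < ⊤)
    (η δ₀ : ℝ) (hη : 0 < η) (hη' : η ≤ 1 / 10) (hδ₀ : 0 ≤ δ₀) (hδ₀' : δ₀ ≤ 1)
    (hstep : ∀ ρ : Measure X, IsFiniteMeasure ρ → ρ ≠ 0 → ∀ ℓ : L,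
      IsFiniteMeasure (ρ.withDensity (func ℓ)) ∧ ρ.withDensity (func ℓ) ≠ 0 ∧
        ∀ S : Set X, MeasurableSet S →
          ((ρ Set.univ)⁻¹ • ρ) S ≤
              ENNReal.ofReal (Real.exp η) *
                ((ρ.withDensity (func ℓ) Set.univ)⁻¹ • ρ.withDensity (func ℓ)) S +
                ENNReal.ofReal δ₀ ∧
            ((ρ.withDensity (func ℓ) Set.univ)⁻¹ • ρ.withDensity (func ℓ)) S ≤
              ENNReal.ofReal (Real.exp η) * ((ρ Set.univ)⁻¹ • ρ) S +
                ENNReal.ofReal δ₀)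
    (T : ℕ) (hT : 1 ≤ T) (ℓs ℓs' : ℕ → L)
    (hdiff : ((Finset.Icc 1 T).filter fun i => ℓs i ≠ ℓs' i).card = 1)
    (μ₀ : Measure X) (hμ₀fin : IsFiniteMeasure μ₀) (hμ₀ne : μ₀ ≠ 0)
    (t : ℕ) (ht : 1 ≤ t) (ht' : t ≤ T) :
    let μt := μ₀.withDensity fun x => ∏ i ∈ Finset.Icc 1 (t - 1), func (ℓs i) x
    let μt' := μ₀.withDensity fun x => ∏ i ∈ Finset.Icc 1 (t - 1), func (ℓs' i) x
    ∀ S : Set X, MeasurableSet S →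
      ((μt Set.univ)⁻¹ • μt) S ≤
          ENNReal.ofReal (Real.exp (2 * η)) * ((μt' Set.univ)⁻¹ • μt') S +
            ENNReal.ofReal (4 * δ₀) ∧
        ((μt' Set.univ)⁻¹ • μt') S ≤
          ENNReal.ofReal (Real.exp (2 * η)) * ((μt Set.univ)⁻¹ • μt) S +
            ENNReal.ofReal (4 * δ₀) := by
  classical
  intro μt μt' S hS
  -- extract the unique differing index j
  obtain ⟨j, hj⟩ := Finset.card_eq_one.mp hdiff
  have hjiff : ∀ i, (i ∈ Finset.Icc 1 T ∧ ℓs i ≠ ℓs' i) ↔ i = j := by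
    intro i
    constructor
    · intro ⟨h1, h2⟩
      have : i ∈ (Finset.Icc 1 T).filter fun i => ℓs i ≠ ℓs' i :=
        Finset.mem_filter.mpr ⟨h1, h2⟩
      simpa [hj] using this
    · intro h
      subst h
      have : i ∈ ({i} : Finset ℕ) := Finset.mem_singleton_self i
      rw [← hj] at this
      exact Finset.mem_filter.mp this
  have hsub : Finset.Icc 1 (t - 1) ⊆ Finset.Icc 1 T := by
    apply Finset.Icc_subset_Icc le_rfl
    omega
  -- basic real facts
  have hexp_nonneg : (0:ℝ) ≤ Real.exp η := (Real.exp_pos η).le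
  have hone_le : (1:ℝ≥0∞) ≤ ENNReal.ofReal (Real.exp (2 * η)) := by
    rw [← ENNReal.ofReal_one]
    exact ENNReal.ofReal_le_ofReal (Real.one_le_exp (by linarith))
  have hδle : ENNReal.ofReal δ₀ ≤ ENNReal.ofReal (4 * δ₀) :=
    ENNReal.ofReal_le_ofReal (by linarith)
  by_cases hjmem : j ∈ Finset.Icc 1 (t - 1)
  · -- the interesting case: μt and μt' are one update of a common ν
    set P : X → ℝ≥0∞ := fun x => ∏ i ∈ (Finset.Icc 1 (t - 1)).erase j, func (ℓs i) x with hP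
    have hPmeas : Measurable P := Finset.measurable_prod _ fun i _ => hmeas (ℓs i)
    have hsame : ∀ i ∈ (Finset.Icc 1 (t - 1)).erase j, ℓs i = ℓs' i := by
      intro i hi
      obtain ⟨hne, hi'⟩ := Finset.mem_erase.mp hi
      by_contra hcon
      exact hne ((hjiff i).mp ⟨hsub hi', hcon⟩)
    have hP' : P = fun x => ∏ i ∈ (Finset.Icc 1 (t - 1)).erase j, func (ℓs' i) x := by
      funext x
      exact Finset.prod_congr rfl fun i hi => by rw [hsame i hi]
    set ν : Measure X := μ₀.withDensity P with hν
    obtain ⟨hνfin, hνne⟩ := aux_finite_nonzero func hmeas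
      (fun ρ h1 h2 ℓ => ⟨(hstep ρ h1 h2 ℓ).1, (hstep ρ h1 h2 ℓ).2.1⟩) μ₀ hμ₀fin hμ₀ne ℓs
      ((Finset.Icc 1 (t - 1)).erase j)
    have hμt : μt = ν.withDensity (func (ℓs j)) := by
      rw [hν, ← withDensity_mul _ hPmeas (hmeas (ℓs j))]
      show μ₀.withDensity _ = μ₀.withDensity _
      congr 1
      funext x
      exact (Finset.prod_erase_mul _ _ hjmem).symm
    have hμt' : μt' = ν.withDensity (func (ℓs' j)) := by
      rw [hν, hP', ← withDensity_mul _ (by rw [← hP']; exact hPmeas) (hmeas (ℓs' j))]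
      show μ₀.withDensity _ = μ₀.withDensity _
      congr 1
      funext x
      exact (Finset.prod_erase_mul _ _ hjmem).symm
    have h1 := ((hstep ν hνfin hνne (ℓs j)).2.2 S hS)
    have h2 := ((hstep ν hνfin hνne (ℓs' j)).2.2 S hS)
    rw [← hμt] at h1
    rw [← hμt'] at h2
    -- compose
    have hEE : ENNReal.ofReal (Real.exp η) * ENNReal.ofReal (Real.exp η) =
        ENNReal.ofReal (Real.exp (2 * η)) := by
      rw [← ENNReal.ofReal_mul hexp_nonneg, ← Real.exp_add]
      ring_nf
    have hδδ : ENNReal.ofReal (Real.exp η) * ENNReal.ofReal δ₀ + ENNReal.ofReal δ₀ ≤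
        ENNReal.ofReal (4 * δ₀) := by
      rw [← ENNReal.ofReal_mul hexp_nonneg, ← ENNReal.ofReal_add (by positivity) hδ₀]
      apply ENNReal.ofReal_le_ofReal
      have h3 : Real.exp η ≤ 3 := by
        have := Real.exp_one_lt_d9
        have h := Real.exp_le_exp.mpr (show η ≤ 1 by linarith)
        linarith
      nlinarith
    constructor
    · calc ((μt Set.univ)⁻¹ • μt) S
          ≤ ENNReal.ofReal (Real.exp η) * ((ν Set.univ)⁻¹ • ν) S + ENNReal.ofReal δ₀ := h1.2
        _ ≤ ENNReal.ofReal (Real.exp η) *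
              (ENNReal.ofReal (Real.exp η) * ((μt' Set.univ)⁻¹ • μt') S + ENNReal.ofReal δ₀) +
              ENNReal.ofReal δ₀ := by gcongr; exact h2.1
        _ = ENNReal.ofReal (Real.exp η) * ENNReal.ofReal (Real.exp η) *
              ((μt' Set.univ)⁻¹ • μt') S +
              (ENNReal.ofReal (Real.exp η) * ENNReal.ofReal δ₀ + ENNReal.ofReal δ₀) := by ring
        _ ≤ ENNReal.ofReal (Real.exp (2 * η)) * ((μt' Set.univ)⁻¹ • μt') S +
              ENNReal.ofReal (4 * δ₀) := by rw [hEE]; gcongr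
    · calc ((μt' Set.univ)⁻¹ • μt') S
          ≤ ENNReal.ofReal (Real.exp η) * ((ν Set.univ)⁻¹ • ν) S + ENNReal.ofReal δ₀ := h2.2
        _ ≤ ENNReal.ofReal (Real.exp η) *
              (ENNReal.ofReal (Real.exp η) * ((μt Set.univ)⁻¹ • μt) S + ENNReal.ofReal δ₀) +
              ENNReal.ofReal δ₀ := by gcongr; exact h1.1
        _ = ENNReal.ofReal (Real.exp η) * ENNReal.ofReal (Real.exp η) *
              ((μt Set.univ)⁻¹ • μt) S +
              (ENNReal.ofReal (Real.exp η) * ENNReal.ofReal δ₀ + ENNReal.ofReal δ₀) := by ring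
        _ ≤ ENNReal.ofReal (Real.exp (2 * η)) * ((μt Set.univ)⁻¹ • μt) S +
              ENNReal.ofReal (4 * δ₀) := by rw [hEE]; gcongr
  · -- trivial case: μt = μt'
    have heq : μt = μt' := by
      show μ₀.withDensity _ = μ₀.withDensity _
      congr 1
      funext x
      refine Finset.prod_congr rfl fun i hi => ?_
      have hij : i ≠ j := fun h => hjmem (h ▸ hi)
      by_contra hcon
      exact hij ((hjiff i).mp ⟨hsub hi, fun h => hcon (by rw [h])⟩)
    have hself : ∀ m : ℝ≥0∞, m ≤ ENNReal.ofReal (Real.exp (2 * η)) * m +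
        ENNReal.ofReal (4 * δ₀) := by
      intro m
      calc m = 1 * m := (one_mul m).symm
        _ ≤ ENNReal.ofReal (Real.exp (2 * η)) * m := by gcongr
        _ ≤ _ := le_self_add
    rw [heq]
    exact ⟨hself _, hself _⟩
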